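/- Let (X,μ,S,T) be an ergodic measure preserving system with commuting transformations S and T. Then for every A ∈ I_T (a T-invariant measurable set) and every B ∈ I_S (an S-invariant measurable set), μ(A ∩ B) = μ(A) · μ(B). -/

import Mathlib

open MeasureTheory Filter Set Function

section Aux

variable {X : Type*} [MeasurableSpace X]

private lemma preimage_comm' {S T : X → X} (h : ∀ x, S (T x) = T (S x)) (u : Set X) :
    S ⁻¹' (T ⁻¹' u) = T ⁻¹' (S ⁻¹' u) := by
  ext x
  simp only [Set.mem_preimage]
  rw [h x]

private lemma preimage_limsup' {Y Z : Type*} (f : Y → Z) (u : ℕ → Set Z) :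
    f ⁻¹' (limsup (α := Set Z) u atTop) = limsup (α := Set Y) (fun n => f ⁻¹' (u n)) atTop := by
  ext x
  simp [mem_limsup_iff_frequently_mem]

/-- Upgrade: if `s` is exactly `S`-invariant and a.e. `T`-invariant, there is a measurable set
exactly invariant under both, a.e. equal to `s`. -/
private lemma aux_step {μ : Measure X} {S T : X → X} (hTm : Measurable T)
    (hTq : Measure.QuasiMeasurePreserving T μ μ) (hc : ∀ x, S (T x) = T (S x))
    {s : Set X} (hsm : MeasurableSet s) (hT' : T ⁻¹' s =ᵐ[μ] s) (hS' : S ⁻¹' s = s) :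
    ∃ t : Set X, MeasurableSet t ∧ t =ᵐ[μ] s ∧ S ⁻¹' t = t ∧ T ⁻¹' t = t := by
  refine ⟨limsup (α := Set X) (fun n => T^[n] ⁻¹' s) atTop, ?_, ?_, ?_, ?_⟩
  · exact .measurableSet_limsup fun n => (hTm.iterate n) hsm
  · exact MeasureTheory.limsup_ae_eq_of_forall_ae_eq _ fun n =>
      hTq.preimage_iterate_ae_eq n hT'
  · rw [preimage_limsup']
    congr 1
    funext n
    have hcn : ∀ x, S (T^[n] x) = T^[n] (S x) := fun x =>
      (Function.Commute.iterate_right hc n) x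
    rw [preimage_comm' hcn, hS']
  · simp only [Set.preimage_iterate_eq]
    exact CompleteLatticeHom.apply_limsup_iterate (CompleteLatticeHom.setPreimage T) s

/-- Zero-one law for sets a.e. invariant under both transformations. -/
private lemma zero_one {μ : Measure X} [IsProbabilityMeasure μ]
    (S T : X ≃ᵐ X) (hS : MeasurePreserving S μ μ) (hT : MeasurePreserving T μ μ)
    (hcomm : ∀ x, S (T x) = T (S x))
    (herg : ∀ s : Set X, MeasurableSet s → ⇑S ⁻¹' s = s → ⇑T ⁻¹' s = s → μ s = 0 ∨ μ s = 1)
    {s : Set X} (hsm : NullMeasurableSet s μ)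
    (hs1 : ⇑S ⁻¹' s =ᵐ[μ] s) (hs2 : ⇑T ⁻¹' s =ᵐ[μ] s) :
    μ s = 0 ∨ μ s = 1 := by
  obtain ⟨t, htm, hts, hSt⟩ :=
    hS.quasiMeasurePreserving.exists_preimage_eq_of_preimage_ae hsm hs1
  have hTt : ⇑T ⁻¹' t =ᵐ[μ] t :=
    (hT.quasiMeasurePreserving.preimage_ae_eq hts).trans (hs2.trans hts.symm)
  obtain ⟨u, hum, hut, hSu, hTu⟩ :=
    aux_step T.measurable hT.quasiMeasurePreserving hcomm htm hTt hSt
  have hmeq : μ u = μ s := measure_congr (hut.trans hts)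
  rcases herg u hum hSu hTu with h | h
  · left; rw [← hmeq]; exact h
  · right; rw [← hmeq]; exact h

private lemma aemem {μ : Measure X} [IsProbabilityMeasure μ]
    (S T : X ≃ᵐ X) (hS : MeasurePreserving S μ μ) (hT : MeasurePreserving T μ μ)
    (hcomm : ∀ x, S (T x) = T (S x))
    (herg : ∀ s : Set X, MeasurableSet s → ⇑S ⁻¹' s = s → ⇑T ⁻¹' s = s → μ s = 0 ∨ μ s = 1)
    {s : Set X} (hsm : NullMeasurableSet s μ)
    (hs1 : ⇑S ⁻¹' s =ᵐ[μ] s) (hs2 : ⇑T ⁻¹' s =ᵐ[μ] s) :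
    (∀ᵐ x ∂μ, x ∈ s) ∨ (∀ᵐ x ∂μ, x ∉ s) := by
  rcases zero_one S T hS hT hcomm herg hsm hs1 hs2 with h | h
  · right
    exact measure_eq_zero_iff_ae_notMem.mp h
  · left
    have hc0 : μ sᶜ = 0 := by
      have h2 := measure_add_measure_compl₀ hsm
      rw [h, measure_univ] at h2
      have h3 : (1 : ENNReal) + μ sᶜ = 1 + 0 := by rw [add_zero]; exact h2
      exact (ENNReal.add_right_inj ENNReal.one_ne_top).mp h3
    have := measure_eq_zero_iff_ae_notMem.mp hc0
    simpa using this

/-- A function a.e. invariant under both transformations is a.e. constant. -/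
private lemma aeconst_fun {μ : Measure X} [IsProbabilityMeasure μ]
    (S T : X ≃ᵐ X) (hS : MeasurePreserving S μ μ) (hT : MeasurePreserving T μ μ)
    (hcomm : ∀ x, S (T x) = T (S x))
    (herg : ∀ s : Set X, MeasurableSet s → ⇑S ⁻¹' s = s → ⇑T ⁻¹' s = s → μ s = 0 ∨ μ s = 1)
    {g : X → ℝ} (hgm : NullMeasurable g μ)
    (h1 : g ∘ ⇑S =ᵐ[μ] g) (h2 : g ∘ ⇑T =ᵐ[μ] g) :
    ∃ c : ℝ, g =ᵐ[μ] fun _ => c := by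
  refine exists_eventuallyEq_const_of_forall_separating MeasurableSet fun U hU => ?_
  refine aemem S T hS hT hcomm herg (s := g ⁻¹' U) (hgm hU) ?_ ?_
  · refine (h1.mono fun x hx => ?_).set_eq
    rw [← preimage_comp, mem_preimage, mem_preimage, hx]
  · refine (h2.mono fun x hx => ?_).set_eq
    rw [← preimage_comp, mem_preimage, mem_preimage, hx]

/-- The σ-algebra of `S`-invariant measurable sets. -/
private def invAlg (S : X → X) : MeasurableSpace X where
  MeasurableSet' s := MeasurableSet s ∧ S ⁻¹' s = s
  measurableSet_empty := ⟨MeasurableSet.empty, by simp⟩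
  measurableSet_compl s hs := ⟨hs.1.compl, by rw [Set.preimage_compl, hs.2]⟩
  measurableSet_iUnion f hf := ⟨MeasurableSet.iUnion fun i => (hf i).1, by
    rw [Set.preimage_iUnion]; exact Set.iUnion_congr fun i => (hf i).2⟩

private lemma measurableSet_invAlg {S : X → X} {s : Set X} :
    MeasurableSet[invAlg S] s ↔ MeasurableSet s ∧ S ⁻¹' s = s := Iff.rfl

end Aux

/-- in an ergodic system with commuting transformations `S` and `T`,
a `T`-invariant set and an `S`-invariant set are independent. -/
theorem inter_invariant_sets_indep {X : Type*} [MeasurableSpace X]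
    (μ : Measure X) [IsProbabilityMeasure μ]
    (S T : X ≃ᵐ X) (hS : MeasurePreserving S μ μ) (hT : MeasurePreserving T μ μ)
    (hcomm : ∀ x, S (T x) = T (S x))
    (herg : ∀ s : Set X, MeasurableSet s → ⇑S ⁻¹' s = s → ⇑T ⁻¹' s = s → μ s = 0 ∨ μ s = 1)
    (A B : Set X) (hA : MeasurableSet A) (hAinv : ⇑T ⁻¹' A = A)
    (hB : MeasurableSet B) (hBinv : ⇑S ⁻¹' B = B) :
    μ (A ∩ B) = μ A * μ B := by
  classical
  have hm : invAlg ⇑S ≤ ‹MeasurableSpace X› := fun s hs => hs.1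
  haveI : SigmaFinite (μ.trim hm) := inferInstance
  set f₀ : X → ℝ := A.indicator fun _ => (1 : ℝ) with hf₀
  have hint : Integrable f₀ μ := (integrable_const (1 : ℝ)).indicator hA
  set g : X → ℝ := μ[f₀|invAlg ⇑S] with hgdef
  have hgsm : StronglyMeasurable[invAlg ⇑S] g := stronglyMeasurable_condExp
  have hmg : Measurable[invAlg ⇑S] g := hgsm.measurable
  -- exact S-invariance of g, pointwise
  have hgS : ∀ x, g (S x) = g x := by
    intro x
    have h1 : MeasurableSet[invAlg ⇑S] (g ⁻¹' {g x}) := hmg (measurableSet_singleton _)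
    have h2 : ⇑S ⁻¹' (g ⁻¹' {g x}) = g ⁻¹' {g x} := h1.2
    have h3 : x ∈ g ⁻¹' {g x} := rfl
    rw [← h2] at h3
    exact h3
  -- the integral of the indicator over any measurable set
  have hind : ∀ s : Set X, MeasurableSet s → ∫ x in s, f₀ x ∂μ = (μ (A ∩ s)).toReal := by
    intro s hsmeas
    rw [hf₀, setIntegral_indicator hA, setIntegral_const, smul_eq_mul, mul_one, Set.inter_comm]
    rfl
  -- commutation of S with T.symm
  have hcomm' : ∀ x, S (T.symm x) = T.symm (S x) := by
    intro x
    apply T.injective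
    rw [T.apply_symm_apply, ← hcomm (T.symm x), T.apply_symm_apply]
  -- g ∘ T is m-measurable
  have hmgT : Measurable[invAlg ⇑S] (g ∘ ⇑T) := by
    intro U hU
    obtain ⟨hUm, hUinv⟩ := hmg hU
    rw [Set.preimage_comp]
    exact ⟨hT.measurable hUm, by rw [preimage_comm' hcomm, hUinv]⟩
  -- a.e. T-invariance of g
  have hgTint : Integrable (g ∘ ⇑T) μ :=
    (hT.integrable_comp integrable_condExp.aestronglyMeasurable).mpr integrable_condExp
  have hgT : g ∘ ⇑T =ᵐ[μ] g := by
    have key : ∀ s : Set X, MeasurableSet[invAlg ⇑S] s → μ s < ⊤ →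
        ∫ x in s, (g ∘ ⇑T) x ∂μ = ∫ x in s, f₀ x ∂μ := by
      intro s hs _
      obtain ⟨hsm', hsinv⟩ := hs
      set s₂ : Set X := ⇑T.symm ⁻¹' s with hs₂def
      have hs₂m : MeasurableSet s₂ := T.symm.measurable hsm'
      have hs₂inv : ⇑S ⁻¹' s₂ = s₂ := by
        rw [hs₂def, preimage_comm' hcomm', hsinv]
      have hTs₂ : ⇑T ⁻¹' s₂ = s := by
        rw [hs₂def]; ext x; simp
      have e1 : ∫ x in s, (g ∘ ⇑T) x ∂μ = ∫ y in s₂, g y ∂μ := by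
        rw [← hTs₂]
        exact hT.setIntegral_preimage_emb T.measurableEmbedding g s₂
      have e2 : ∫ y in s₂, g y ∂μ = ∫ y in s₂, f₀ y ∂μ :=
        setIntegral_condExp hm hint ⟨hs₂m, hs₂inv⟩
      have e4 : μ (A ∩ s₂) = μ (A ∩ s) := by
        have hpr : ⇑T ⁻¹' (A ∩ s₂) = A ∩ s := by
          rw [Set.preimage_inter, hAinv, hTs₂]
        calc μ (A ∩ s₂) = μ (⇑T ⁻¹' (A ∩ s₂)) :=
              (hT.measure_preimage (hA.inter hs₂m).nullMeasurableSet).symm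
          _ = μ (A ∩ s) := by rw [hpr]
      rw [e1, e2, hind s₂ hs₂m, hind s hsm', e4]
    exact ae_eq_condExp_of_forall_setIntegral_eq hm hint
      (fun s _ _ => hgTint.integrableOn) key
      (hmgT.stronglyMeasurable.aestronglyMeasurable)
  -- g is a.e. constant
  have hgnm : NullMeasurable g μ := (hgsm.mono hm).measurable.nullMeasurable
  obtain ⟨c, hc⟩ := aeconst_fun S T hS hT hcomm herg hgnm
    (Filter.Eventually.of_forall fun x => hgS x) hgT
  -- the constant is (μ A).toReal
  have hc' : c = (μ A).toReal := by
    have e5 : ∫ x, g x ∂μ = c := by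
      rw [integral_congr_ae hc, integral_const, Measure.real, measure_univ, ENNReal.toReal_one, one_smul]
    have e6 : ∫ x, g x ∂μ = (μ A).toReal := by
      rw [hgdef, integral_condExp hm, hf₀, integral_indicator hA, setIntegral_const,
        smul_eq_mul, mul_one, Measure.real]
    rw [← e5, e6]
  -- conclude
  have e7 : ∫ x in B, g x ∂μ = ∫ x in B, f₀ x ∂μ := setIntegral_condExp hm hint ⟨hB, hBinv⟩
  have e8 : ∫ x in B, g x ∂μ = (μ A).toReal * (μ B).toReal := by
    rw [setIntegral_congr_ae hB (hc.mono fun x hx _ => hx), setIntegral_const, smul_eq_mul,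
      hc', mul_comm, Measure.real]
  have e9 : (μ (A ∩ B)).toReal = (μ A * μ B).toReal := by
    rw [ENNReal.toReal_mul, ← e8, e7, hind B hB]
  exact (ENNReal.toReal_eq_toReal_iff' (measure_ne_top μ _)
    (ENNReal.mul_ne_top (measure_ne_top μ A) (measure_ne_top μ B))).mp e9
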